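/- For the toy example with w₁ = 1/2 and W(t) = √t, P(s) = s², fixing t₂ = √(t₁)/s₂: for any fixed s₁, the function s₂ ↦ ((1/(2s₁))s₁² + (√(1/(2s₁))/s₂)s₂²) / (1/(2s₁) + √(1/(2s₁))/s₂) is nondecreasing in s₂ on (0,1]. -/

import Mathlib

theorem stmt_8 (s₁ : ℝ) (hs₁ : 0 < s₁) :
    MonotoneOn (fun s₂ : ℝ =>
      ((1 / (2 * s₁)) * s₁ ^ 2 + (Real.sqrt (1 / (2 * s₁)) / s₂) * s₂ ^ 2) /
      (1 / (2 * s₁) + Real.sqrt (1 / (2 * s₁)) / s₂)) (Set.Ioc (0:ℝ) 1) := by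
  have ha : 0 < 1 / (2 * s₁) := by positivity
  set a := 1 / (2 * s₁) with ha_def
  set b := Real.sqrt a with hb_def
  have hb : 0 < b := Real.sqrt_pos.mpr ha
  have hb2 : b ^ 2 = a := Real.sq_sqrt ha.le
  intro x hx y hy hxy
  obtain ⟨hx0, _⟩ := hx
  obtain ⟨hy0, _⟩ := hy
  simp only
  have hdx : 0 < a + b / x := by positivity
  have hdy : 0 < a + b / y := by positivity
  rw [div_le_div_iff₀ hdx hdy]
  have hx0' : x ≠ 0 := ne_of_gt hx0
  have hy0' : y ≠ 0 := ne_of_gt hy0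
  field_simp
  nlinarith [mul_pos hx0 hy0, mul_nonneg (mul_nonneg hb.le (sub_nonneg.mpr hxy))
    (add_nonneg (add_nonneg (mul_nonneg ha.le (sq_nonneg s₁)) (mul_nonneg hb.le (by linarith : (0:ℝ) ≤ x + y))) (mul_nonneg ha.le (mul_pos hx0 hy0).le)), sq_nonneg (x-y), sq_nonneg (x+y)]
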